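/- Conditional-distribution perturbation bound: let P̃ and P be probability distributions on a finite product set 𝒳 × 𝒴 with P strictly positive, and set p = min_{x ∈ 𝒳} P_X(x) > 0. If D_{χ²}(P̃ || P) ≤ β² for some β with 0 ≤ β ≤ p/2, then P̃_X(x) ≥ p/2 > 0 for every x, and for all x ∈ 𝒳 and y ∈ 𝒴, |P̃_{Y|X}(y|x) − P_{Y|X}(y|x)| ≤ 4β/p, where P_{Y|X}(y|x) = P(x,y)/P_X(x) and P̃_{Y|X}(y|x) = P̃(x,y)/P̃_X(x). -/
import Mathlib


open Finset

/-- Neyman's χ²-divergence D_{χ²}(P || Q) = Σ_s (P(s) − Q(s))² / Q(s) on a finite set. -/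
noncomputable def chiSq {S : Type} [Fintype S] (P Q : S → ℝ) : ℝ :=
  ∑ s, (P s - Q s) ^ 2 / Q s

/-- Conditional-distribution perturbation bound: let P̃ and P be
probability distributions on a finite product set 𝒳 × 𝒴 with P strictly positive
and p = min_x P_X(x) > 0. If D_{χ²}(P̃ || P) ≤ β² for some 0 ≤ β ≤ p/2, then
P̃_X(x) ≥ p/2 > 0 for every x, and for all x, y,
|P̃_{Y|X}(y|x) − P_{Y|X}(y|x)| ≤ 4β/p. -/
theorem conditional_distribution_perturbation_bound
    {𝒳 𝒴 : Type} [Fintype 𝒳] [Fintype 𝒴] [Nonempty 𝒳]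
    (Pt P : 𝒳 × 𝒴 → ℝ)
    (hPt0 : ∀ s, 0 ≤ Pt s) (hPt1 : ∑ s, Pt s = 1)
    (hP0 : ∀ s, 0 < P s) (hP1 : ∑ s, P s = 1)
    (p : ℝ)
    (hp : p = Finset.univ.inf' Finset.univ_nonempty (fun x : 𝒳 => ∑ y, P (x, y)))
    (β : ℝ) (hβ0 : 0 ≤ β) (hβp : β ≤ p / 2) (hD : chiSq Pt P ≤ β ^ 2) :
    (0 < p / 2) ∧ (∀ x : 𝒳, p / 2 ≤ ∑ y, Pt (x, y)) ∧
      ∀ (x : 𝒳) (y : 𝒴),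
        |Pt (x, y) / (∑ y', Pt (x, y')) - P (x, y) / (∑ y', P (x, y'))| ≤ 4 * β / p := by
  classical
  have h𝒴 : Nonempty 𝒴 := by
    by_contra h
    haveI : IsEmpty 𝒴 := not_nonempty_iff.mp h
    haveI : IsEmpty (𝒳 × 𝒴) := inferInstance
    rw [Finset.univ_eq_empty, Finset.sum_empty] at hP1
    norm_num at hP1
  have hterm_nonneg : ∀ s : 𝒳 × 𝒴, 0 ≤ (Pt s - P s) ^ 2 / P s :=
    fun s => div_nonneg (sq_nonneg _) (hP0 s).le
  have hterm : ∀ s : 𝒳 × 𝒴, (Pt s - P s) ^ 2 / P s ≤ β ^ 2 := by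
    intro s
    calc (Pt s - P s) ^ 2 / P s
        ≤ ∑ t, (Pt t - P t) ^ 2 / P t :=
          Finset.single_le_sum (fun t _ => hterm_nonneg t) (Finset.mem_univ s)
      _ ≤ β ^ 2 := hD
  have hPle1 : ∀ s : 𝒳 × 𝒴, P s ≤ 1 := by
    intro s
    rw [← hP1]
    exact Finset.single_le_sum (fun t _ => (hP0 t).le) (Finset.mem_univ s)
  have hΔ : ∀ s : 𝒳 × 𝒴, |Pt s - P s| ≤ β := by
    intro s
    have h2 : (Pt s - P s) ^ 2 ≤ β ^ 2 * P s := (div_le_iff₀ (hP0 s)).mp (hterm s)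
    have h3 : (Pt s - P s) ^ 2 ≤ β ^ 2 := by nlinarith [hPle1 s, sq_nonneg β, hP0 s]
    have := Real.sqrt_le_sqrt h3
    rwa [Real.sqrt_sq_eq_abs, Real.sqrt_sq hβ0] at this
  -- marginal facts for P
  have hmargP : ∀ x : 𝒳, p ≤ ∑ y, P (x, y) := by
    intro x
    rw [hp]
    exact Finset.inf'_le _ (Finset.mem_univ x)
  have hppos : 0 < p := by
    obtain ⟨x0, -, hx0⟩ :=
      Finset.exists_mem_eq_inf' Finset.univ_nonempty (fun x : 𝒳 => ∑ y, P (x, y))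
    rw [hp, hx0]
    exact Finset.sum_pos (fun y _ => hP0 _) Finset.univ_nonempty
  have hmargP_le1 : ∀ x : 𝒳, ∑ y, P (x, y) ≤ 1 := by
    intro x
    rw [← hP1, Fintype.sum_prod_type]
    exact Finset.single_le_sum
      (fun x' _ => Finset.sum_nonneg fun y _ => (hP0 _).le) (Finset.mem_univ x)
  have hfiber : ∀ x : 𝒳, ∑ y, (Pt (x, y) - P (x, y)) ^ 2 / P (x, y) ≤ β ^ 2 := by
    intro x
    refine le_trans ?_ hD
    unfold chiSq
    rw [Fintype.sum_prod_type]
    exact Finset.single_le_sum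
      (fun x' _ => Finset.sum_nonneg fun y _ => hterm_nonneg _) (Finset.mem_univ x)
  -- marginal deviation
  have hmargΔ : ∀ x : 𝒳, |(∑ y, Pt (x, y)) - ∑ y, P (x, y)| ≤ β := by
    intro x
    set f : 𝒴 → ℝ := fun y => (Pt (x, y) - P (x, y)) / Real.sqrt (P (x, y)) with hf
    set g : 𝒴 → ℝ := fun y => Real.sqrt (P (x, y)) with hg
    have hgne : ∀ y, g y ≠ 0 := fun y =>
      ne_of_gt (Real.sqrt_pos.mpr (hP0 _))
    have hfg : ∀ y, f y * g y = Pt (x, y) - P (x, y) := by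
      intro y
      rw [hf, hg]
      field_simp
      exact mul_div_cancel_right₀ _ (ne_of_gt (Real.sqrt_pos.mpr (hP0 _)))
    have hf2 : ∀ y, f y ^ 2 = (Pt (x, y) - P (x, y)) ^ 2 / P (x, y) := by
      intro y
      rw [hf, div_pow, Real.sq_sqrt (hP0 _).le]
    have hg2 : ∀ y, g y ^ 2 = P (x, y) := fun y => Real.sq_sqrt (hP0 _).le
    have CS := Finset.sum_mul_sq_le_sq_mul_sq Finset.univ f g
    rw [show ∑ y, f y * g y = ∑ y, (Pt (x, y) - P (x, y)) from
        Finset.sum_congr rfl (fun y _ => hfg y)] at CS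
    rw [show ∑ y, f y ^ 2 = ∑ y, (Pt (x, y) - P (x, y)) ^ 2 / P (x, y) from
        Finset.sum_congr rfl (fun y _ => hf2 y)] at CS
    rw [show ∑ y, g y ^ 2 = ∑ y, P (x, y) from
        Finset.sum_congr rfl (fun y _ => hg2 y)] at CS
    have h1 : (∑ y, (Pt (x, y) - P (x, y))) ^ 2 ≤ β ^ 2 := by
      refine CS.trans ?_
      have hnn : 0 ≤ ∑ y, (Pt (x, y) - P (x, y)) ^ 2 / P (x, y) :=
        Finset.sum_nonneg fun y _ => hterm_nonneg _
      nlinarith [hfiber x, hmargP_le1 x, hmargP x, hppos]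
    have h2 : (∑ y, Pt (x, y)) - ∑ y, P (x, y) = ∑ y, (Pt (x, y) - P (x, y)) := by
      rw [Finset.sum_sub_distrib]
    rw [h2]
    have := Real.sqrt_le_sqrt h1
    rwa [Real.sqrt_sq_eq_abs, Real.sqrt_sq hβ0] at this
  have hmargPt : ∀ x : 𝒳, p / 2 ≤ ∑ y, Pt (x, y) := by
    intro x
    have h := abs_le.mp (hmargΔ x)
    have := hmargP x
    linarith
  refine ⟨half_pos hppos, hmargPt, ?_⟩
  intro x y
  set a := Pt (x, y) with ha
  set b := P (x, y) with hb
  set A := ∑ y', Pt (x, y') with hA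
  set B := ∑ y', P (x, y') with hB
  have hApos : 0 < A := lt_of_lt_of_le (half_pos hppos) (hmargPt x)
  have hBpos : 0 < B := lt_of_lt_of_le hppos (hmargP x)
  have hbB : b ≤ B := Finset.single_le_sum (fun y' _ => (hP0 _).le) (Finset.mem_univ y)
  have habs1 : |a - b| ≤ β := hΔ (x, y)
  have habs2 : |B - A| ≤ β := by rw [abs_sub_comm]; exact hmargΔ x
  have key : a / A - b / B = (a - b) / A + (b / B) * ((B - A) / A) := by
    field_simp
    ring
  have e1 : |(a - b) / A| ≤ β / (p / 2) := by
    rw [abs_div, abs_of_pos hApos]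
    exact div_le_div₀ hβ0 habs1 (half_pos hppos) (hmargPt x)
  have e2 : |(b / B) * ((B - A) / A)| ≤ β / (p / 2) := by
    rw [abs_mul, abs_div, abs_div, abs_of_pos hApos, abs_of_pos hBpos]
    have h1 : |b| / B ≤ 1 := by
      rw [div_le_one hBpos, abs_of_pos (hP0 (x, y))]
      exact hbB
    have h2 : |B - A| / A ≤ β / (p / 2) :=
      div_le_div₀ hβ0 habs2 (half_pos hppos) (hmargPt x)
    calc |b| / B * (|B - A| / A) ≤ 1 * (β / (p / 2)) := by
          exact mul_le_mul h1 h2 (div_nonneg (abs_nonneg _) hApos.le)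
            zero_le_one
      _ = β / (p / 2) := one_mul _
  have hsum : β / (p / 2) + β / (p / 2) = 4 * β / p := by
    field_simp
    ring
  calc |a / A - b / B| ≤ |(a - b) / A| + |(b / B) * ((B - A) / A)| := by
        rw [key]; exact abs_add_le _ _
    _ ≤ β / (p / 2) + β / (p / 2) := add_le_add e1 e2
    _ = 4 * β / p := hsum
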